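/- Let χ_e ∈ H¹(Tⁿ) be the mean-zero solution of the cell problem -Δχ_e + A u·∇χ_e = A u·e, and define the effective diffusivity D_e(A) = 1 + ∫_{Tⁿ}|∇χ_e|² dx. If the equation u·∇φ_e = u·e admits a solution φ_e ∈ H¹(Tⁿ), then D_e(A) ≤ 1 + 4‖∇φ_e‖²_{L²(Tⁿ)} for all A ∈ ℝ; in particular sup_A D_e(A) < ∞. -/

import Mathlib

open MeasureTheory Real Filter
open scoped RealInnerProductSpace ENNReal

noncomputable section

/-- The unit periodicity cell `[0,1]ⁿ` of the torus `Tⁿ`. -/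
def cube (n : ℕ) : Set (EuclideanSpace ℝ (Fin n)) :=
  {x | ∀ i, x i ∈ Set.Icc (0 : ℝ) 1}

/-- The Laplacian of a scalar function on `ℝⁿ`. -/
def lap {n : ℕ} (f : EuclideanSpace ℝ (Fin n) → ℝ) (x : EuclideanSpace ℝ (Fin n)) : ℝ :=
  ∑ i, ⟪fderiv ℝ (gradient f) x (EuclideanSpace.single i 1), EuclideanSpace.single i 1⟫

/-- The divergence of a vector field on `ℝⁿ`. -/
def divg {n : ℕ} (u : EuclideanSpace ℝ (Fin n) → EuclideanSpace ℝ (Fin n))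
    (x : EuclideanSpace ℝ (Fin n)) : ℝ :=
  ∑ i, fderiv ℝ u x (EuclideanSpace.single i 1) i

open Submodule Topology

abbrev Eu (n : ℕ) := EuclideanSpace ℝ (Fin n)

def bas (n : ℕ) : Module.Basis (Fin n) ℝ (Eu n) := (EuclideanSpace.basisFun (Fin n) ℝ).toBasis

def Per {α : Type*} {n : ℕ} (v : Eu n → α) : Prop :=
  ∀ x i, v (x + EuclideanSpace.single i 1) = v x

variable {n : ℕ}

instance : VAddInvariantMeasure (↥(span ℤ (Set.range ⇑(bas n)))) (Eu n) volume :=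
  ⟨fun c s hs => measure_preimage_add volume (c : Eu n) s⟩

instance : MeasurableVAdd (↥(span ℤ (Set.range ⇑(bas n)))) (Eu n) :=
  { toMeasurableConstVAdd := ⟨fun c => measurable_id.const_add _⟩
    measurable_vadd_const := fun x => measurable_subtype_coe.add_const x }

lemma bas_apply (i : Fin n) : bas n i = EuclideanSpace.single i 1 := by
  simp [bas, EuclideanSpace.basisFun_apply]

lemma per_lattice {α : Type*} {v : Eu n → α} (hv : Per v) {g : Eu n}
    (hg : g ∈ span ℤ (Set.range ⇑(bas n))) (x : Eu n) : v (x + g) = v x := by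
  induction hg using Submodule.span_induction generalizing x with
  | mem y hy =>
    obtain ⟨i, rfl⟩ := hy
    rw [bas_apply]; exact hv x i
  | zero => simp
  | add a b _ _ ha hb => rw [← add_assoc, hb (x + a), ha x]
  | smul z a _ ha =>
    induction z using Int.induction_on generalizing x with
    | zero => simp
    | succ k ih =>
      have : ((k : ℤ) + 1) • a = (k : ℤ) • a + a := by rw [add_smul, one_smul]
      rw [this, ← add_assoc, ha, ih]
    | pred k ih =>
      have hs : (-(k : ℤ) - 1) • a = -a + (-(k : ℤ)) • a := by module
      rw [hs, ← add_assoc, ih (x + -a)]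
      have := ha (x + -a)
      rw [add_assoc, neg_add_cancel, add_zero] at this
      exact this.symm

lemma hyperplane_null (i : Fin n) : volume {x : Eu n | x i = 1} = 0 := by
  set f := (EuclideanSpace.proj i : Eu n →L[ℝ] ℝ)
  set p : Eu n := EuclideanSpace.single i 1
  set A : AffineSubspace ℝ (Eu n) := AffineSubspace.mk' p (LinearMap.ker (f : Eu n →ₗ[ℝ] ℝ))
  have hset : {x : Eu n | x i = 1} = (A : Set (Eu n)) := by
    ext x
    simp only [Set.mem_setOf_eq, A, AffineSubspace.mem_coe, AffineSubspace.mem_mk',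
      LinearMap.mem_ker, vsub_eq_sub]
    have : f (x - p) = x i - 1 := by
      simp [f, p, EuclideanSpace.single_apply]
    constructor
    · intro h; simp only [ContinuousLinearMap.coe_coe]; rw [this, h, sub_self]
    · intro h; rw [ContinuousLinearMap.coe_coe] at h; rw [this] at h; linarith
  rw [hset]
  refine Measure.addHaar_affineSubspace volume A ?_
  intro hA
  have h0 : (0 : Eu n) ∈ A := hA ▸ AffineSubspace.mem_top ℝ _ 0
  rw [AffineSubspace.mem_mk'] at h0
  simp only [vsub_eq_sub, zero_sub, LinearMap.mem_ker, ContinuousLinearMap.coe_coe, map_neg] at h0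
  have : f p = 1 := by simp [f, p, EuclideanSpace.single_apply]
  rw [this] at h0; norm_num at h0

lemma cube_ae : (cube n : Set (Eu n)) =ᵐ[volume] ZSpan.fundamentalDomain (bas n) := by
  have hFD : ZSpan.fundamentalDomain (bas n) = {x : Eu n | ∀ i, x i ∈ Set.Ico (0:ℝ) 1} := by
    ext x
    simp only [ZSpan.fundamentalDomain, Set.mem_setOf_eq, bas,
      OrthonormalBasis.coe_toBasis_repr_apply, EuclideanSpace.basisFun_repr]
  have hsub : (cube n \ ZSpan.fundamentalDomain (bas n)) ∪
      (ZSpan.fundamentalDomain (bas n) \ cube n) ⊆ ⋃ i, {x : Eu n | x i = 1} := by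
    rw [hFD]
    rintro x (⟨hc, hf⟩ | ⟨hf, hc⟩)
    · simp only [Set.mem_setOf_eq, not_forall] at hf
      obtain ⟨i, hi⟩ := hf
      have := hc i
      simp only [Set.mem_Icc] at this
      simp only [Set.mem_Ico, not_and, not_lt] at hi
      exact Set.mem_iUnion.2 ⟨i, le_antisymm this.2 (hi this.1)⟩
    · exact absurd (fun i => ⟨(hf i).1, (hf i).2.le⟩) hc
  have hnull : volume (⋃ i, {x : Eu n | x i = 1}) = 0 :=
    le_antisymm ((measure_iUnion_le _).trans (by simp [hyperplane_null])) zero_le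
  exact (measure_mono_null hsub hnull |> fun h => (ae_eq_set.2
    ⟨measure_mono_null (Set.subset_union_left) h,
     measure_mono_null (Set.subset_union_right) h⟩))

lemma shift_integral {v : Eu n → ℝ} (hv : Per v) (c : Eu n) :
    ∫ x in cube n, v (x + c) = ∫ x in cube n, v x := by
  have hFD := ZSpan.isAddFundamentalDomain (bas n) (volume : Measure (Eu n))
  set L := span ℤ (Set.range ⇑(bas n))
  have hinv : ∀ (g : L) (x : Eu n), v (g +ᵥ x) = v x := by
    intro g x
    have := per_lattice hv g.2 x
    rwa [add_comm] at this
  -- translated fundamental domain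
  have htrans : IsAddFundamentalDomain L ((fun x : Eu n => x + c) ''
      ZSpan.fundamentalDomain (bas n)) volume := by
    refine hFD.image_of_equiv (Equiv.addRight c) ?_ (Equiv.refl L) ?_
    · have : MeasurePreserving ((Equiv.addRight c).symm) volume (volume : Measure (Eu n)) := by
        simpa using measurePreserving_add_right (volume : Measure (Eu n)) (-c)
      exact this.quasiMeasurePreserving
    · intro g x
      show ((g : Eu n) + x) + c = (g : Eu n) + (x + c)
      abel
  calc ∫ x in cube n, v (x + c) = ∫ x in ZSpan.fundamentalDomain (bas n), v (x + c) :=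
        setIntegral_congr_set cube_ae
    _ = ∫ y in (fun x : Eu n => x + c) '' ZSpan.fundamentalDomain (bas n), v y :=
        ((measurePreserving_add_right volume c).setIntegral_image_emb
          (measurableEmbedding_addRight c) v _).symm
    _ = ∫ y in ZSpan.fundamentalDomain (bas n), v y := htrans.setIntegral_eq hFD hinv
    _ = ∫ x in cube n, v x := (setIntegral_congr_set cube_ae).symm

lemma cube_compact : IsCompact (cube n) := by
  have : cube n = ⇑(EuclideanSpace.equiv (Fin n) ℝ) ⁻¹' (Set.univ.pi fun _ => Set.Icc (0:ℝ) 1) := by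
    ext x
    simp only [cube, Set.mem_setOf_eq, Set.mem_preimage, Set.mem_pi, Set.mem_univ,
      forall_true_left]
    rfl
  rw [this]
  exact (EuclideanSpace.equiv (Fin n) ℝ).toHomeomorph.isCompact_preimage.2
    (isCompact_univ_pi fun _ => isCompact_Icc)

lemma exists_cube_rep (x : Eu n) :
    ∃ y ∈ cube n, ∃ g ∈ span ℤ (Set.range ⇑(bas n)), x = y + g := by
  refine ⟨ZSpan.fract (bas n) x, ?_, x - ZSpan.fract (bas n) x, ?_, by abel⟩
  · have h := ZSpan.fract_mem_fundamentalDomain (bas n) x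
    simp only [ZSpan.fundamentalDomain, Set.mem_setOf_eq, bas,
      OrthonormalBasis.coe_toBasis_repr_apply, EuclideanSpace.basisFun_repr] at h
    intro i; exact ⟨(h i).1, (h i).2.le⟩
  · have : x - ZSpan.fract (bas n) x = ↑(ZSpan.floor (bas n) x) := by
      rw [ZSpan.fract]; abel
    rw [this]; exact (ZSpan.floor (bas n) x).2

lemma bounded_of_continuous_per {F : Type*} [NormedAddCommGroup F] {v : Eu n → F}
    (hc : Continuous v) (hper : Per v) : ∃ C : ℝ, 0 ≤ C ∧ ∀ x, ‖v x‖ ≤ C := by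
  obtain ⟨C, hC⟩ := cube_compact.exists_bound_of_continuousOn hc.continuousOn
  refine ⟨max C 0, le_max_right _ _, fun x => ?_⟩
  obtain ⟨y, hy, g, hg, rfl⟩ := exists_cube_rep x
  rw [per_lattice hper hg]
  exact (hC y hy).trans (le_max_left _ _)

lemma per_fderiv {F : Type*} [NormedAddCommGroup F] [NormedSpace ℝ F] {v : Eu n → F}
    (hd : Differentiable ℝ v) (hper : Per v) : Per (fderiv ℝ v) := by
  intro x i
  have hfun : (fun y => v (y + EuclideanSpace.single i 1)) = v := funext fun y => hper y i
  have h2 : HasFDerivAt (fun y => v (y + EuclideanSpace.single i 1))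
      ((fderiv ℝ v (x + EuclideanSpace.single i 1)).comp (ContinuousLinearMap.id ℝ (Eu n))) x :=
    (hd _).hasFDerivAt.comp x ((hasFDerivAt_id x).add_const _)
  rw [hfun] at h2
  rw [h2.fderiv]
  exact (ContinuousLinearMap.comp_id _).symm

lemma lipschitz_of_contDiff_per {F : Type*} [NormedAddCommGroup F] [NormedSpace ℝ F]
    {v : Eu n → F} (hv : ContDiff ℝ 1 v) (hper : Per v) : ∃ K : NNReal, LipschitzWith K v := by
  have hd : Differentiable ℝ v := hv.differentiable one_ne_zero
  have hfc : Continuous (fderiv ℝ v) := hv.continuous_fderiv one_ne_zero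
  obtain ⟨C, hC0, hC⟩ := bounded_of_continuous_per hfc (per_fderiv hd hper)
  refine ⟨C.toNNReal, lipschitzWith_of_nnnorm_fderiv_le hd fun x => ?_⟩
  rw [← NNReal.coe_le_coe, coe_nnnorm, Real.coe_toNNReal _ hC0]
  exact hC x

lemma lipschitz_mul {f g : Eu n → ℝ} {Kf Kg : NNReal} {Cf Cg : ℝ}
    (hf : LipschitzWith Kf f) (hg : LipschitzWith Kg g)
    (hCf : ∀ x, ‖f x‖ ≤ Cf) (hCg : ∀ x, ‖g x‖ ≤ Cg) :
    ∃ K : NNReal, LipschitzWith K (fun x => f x * g x) := by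
  have hCf0 : 0 ≤ Cf := le_trans (norm_nonneg _) (hCf 0)
  have hCg0 : 0 ≤ Cg := le_trans (norm_nonneg _) (hCg 0)
  refine ⟨(Cf * Kg + Cg * Kf).toNNReal, LipschitzWith.of_dist_le_mul fun x y => ?_⟩
  have h1 := hf.dist_le_mul x y
  have h2 := hg.dist_le_mul x y
  have hcoe : ((Cf * Kg + Cg * Kf).toNNReal : ℝ) = Cf * Kg + Cg * Kf := by
    rw [Real.coe_toNNReal]
    positivity
  rw [hcoe, Real.dist_eq]
  have key : f x * g x - f y * g y = f x * (g x - g y) + g y * (f x - f y) := by ring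
  rw [key]
  calc |f x * (g x - g y) + g y * (f x - f y)|
      ≤ |f x * (g x - g y)| + |g y * (f x - f y)| := abs_add_le _ _
    _ = |f x| * |g x - g y| + |g y| * |f x - f y| := by rw [abs_mul, abs_mul]
    _ ≤ Cf * (Kg * dist x y) + Cg * (Kf * dist x y) := by
        have e1 : |g x - g y| ≤ (Kg : ℝ) * dist x y := by rw [← Real.dist_eq]; exact h2
        have e2 : |f x - f y| ≤ (Kf : ℝ) * dist x y := by rw [← Real.dist_eq]; exact h1
        have e3 : |f x| ≤ Cf := (Real.norm_eq_abs (f x)) ▸ hCf x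
        have e4 : |g y| ≤ Cg := (Real.norm_eq_abs (g y)) ▸ hCg y
        exact add_le_add (mul_le_mul e3 e1 (abs_nonneg _) hCf0)
          (mul_le_mul e4 e2 (abs_nonneg _) hCg0)
    _ = (Cf * Kg + Cg * Kf) * dist x y := by ring

lemma integral_fderiv_cube_eq_zero {v : Eu n → ℝ} {K : NNReal}
    (hlip : LipschitzWith K v) (hper : Per v) (w : Eu n) :
    ∫ x in cube n, fderiv ℝ v x w = 0 := by
  set μ : Measure (Eu n) := volume.restrict (cube n) with hμ
  have hfin : IsFiniteMeasure μ := ⟨by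
    rw [hμ, Measure.restrict_apply_univ]; exact cube_compact.measure_lt_top⟩
  have hvcont : Continuous v := hlip.continuous
  set F : ℕ → Eu n → ℝ := fun k x => (k + 1 : ℝ) * (v (x + ((k : ℝ) + 1)⁻¹ • w) - v x) with hF
  have hFint : ∀ k, ∫ x, F k x ∂μ = 0 := by
    intro k
    have hi1 : IntegrableOn (fun x => v (x + ((k : ℝ) + 1)⁻¹ • w)) (cube n) :=
      ((hvcont.comp (continuous_id.add continuous_const)).continuousOn).integrableOn_compact
        cube_compact
    have hi2 : IntegrableOn v (cube n) := hvcont.continuousOn.integrableOn_compact cube_compact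
    rw [hμ]
    show ∫ x in cube n, (k + 1 : ℝ) * (v (x + ((k : ℝ) + 1)⁻¹ • w) - v x) = 0
    rw [integral_const_mul, integral_sub hi1 hi2, shift_integral hper, sub_self, mul_zero]
  have hbound : ∀ k, ∀ᵐ x ∂μ, ‖F k x‖ ≤ (K : ℝ) * ‖w‖ := by
    intro k
    refine ae_of_all _ fun x => ?_
    have hk : (0:ℝ) < (k : ℝ) + 1 := by positivity
    have hd := hlip.dist_le_mul (x + ((k : ℝ) + 1)⁻¹ • w) x
    rw [dist_eq_norm] at hd
    have hdx : ‖x + ((k : ℝ) + 1)⁻¹ • w - x‖ = ((k : ℝ) + 1)⁻¹ * ‖w‖ := by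
      rw [add_sub_cancel_left, norm_smul, Real.norm_eq_abs, abs_of_pos (by positivity)]
    rw [dist_eq_norm, hdx] at hd
    have : ‖F k x‖ = ((k : ℝ) + 1) * ‖v (x + ((k : ℝ) + 1)⁻¹ • w) - v x‖ := by
      rw [hF]; simp only [norm_mul, Real.norm_eq_abs, abs_of_pos hk]
    rw [this]
    calc ((k : ℝ) + 1) * ‖v (x + ((k : ℝ) + 1)⁻¹ • w) - v x‖
        ≤ ((k : ℝ) + 1) * ((K : ℝ) * (((k : ℝ) + 1)⁻¹ * ‖w‖)) := by gcongr
      _ = (K : ℝ) * ‖w‖ := by field_simp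
  have hlim : ∀ᵐ x ∂μ, Tendsto (fun k => F k x) atTop (𝓝 (fderiv ℝ v x w)) := by
    refine ae_restrict_of_ae ?_
    filter_upwards [hlip.ae_differentiableAt (μ := volume)] with x hx
    have hc : Tendsto (fun k : ℕ => ‖((k : ℝ) + 1)‖) atTop atTop := by
      have h1 : Tendsto (fun k : ℕ => ((k : ℝ) + 1)) atTop atTop :=
        tendsto_atTop_add_const_right _ 1 tendsto_natCast_atTop_atTop
      refine h1.congr' ?_
      filter_upwards with k
      rw [Real.norm_eq_abs, abs_of_pos (by positivity)]
    have := hx.hasFDerivAt.lim w hc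
    refine this.congr fun k => ?_
    rw [hF]; simp [smul_eq_mul]
  have hmeas : ∀ k, AEStronglyMeasurable (F k) μ := fun k =>
    ((continuous_const.mul ((hvcont.comp (continuous_id.add continuous_const)).sub
      hvcont))).aestronglyMeasurable
  have := tendsto_integral_of_dominated_convergence (fun _ => (K : ℝ) * ‖w‖) hmeas
    (integrable_const _) hbound hlim
  have h0 : Tendsto (fun k => ∫ x, F k x ∂μ) atTop (𝓝 0) := by
    simp only [hFint]
    exact tendsto_const_nhds
  exact (tendsto_nhds_unique this h0)

lemma innerE (z w : Eu n) : ⟪z, w⟫ = ∑ i, z i * w i := by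
  simp [PiLp.inner_apply, RCLike.inner_apply, conj_trivial]
  exact Finset.sum_congr rfl fun _ _ => mul_comm _ _

lemma inner_single (z : Eu n) (i : Fin n) : ⟪z, EuclideanSpace.single i 1⟫ = z i := by
  rw [innerE]
  rw [Finset.sum_eq_single i]
  · simp [EuclideanSpace.single_apply]
  · intro j _ hj; simp [EuclideanSpace.single_apply, hj]
  · intro h; exact absurd (Finset.mem_univ i) h

lemma grad_def (f : Eu n → ℝ) :
    gradient f = fun x => (InnerProductSpace.toDual ℝ (Eu n)).symm (fderiv ℝ f x) := rfl

lemma inner_grad (f : Eu n → ℝ) (x y : Eu n) : ⟪gradient f x, y⟫ = fderiv ℝ f x y := by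
  simp [grad_def, InnerProductSpace.toDual_symm_apply]

lemma grad_coord (f : Eu n → ℝ) (x : Eu n) (i : Fin n) :
    gradient f x i = fderiv ℝ f x (EuclideanSpace.single i 1) := by
  rw [← inner_single (gradient f x) i, inner_grad]

lemma grad_contDiff_one {f : Eu n → ℝ} (hf : ContDiff ℝ 2 f) : ContDiff ℝ 1 (gradient f) := by
  rw [grad_def]
  exact (InnerProductSpace.toDual ℝ (Eu n)).symm.contDiff.comp
    (hf.fderiv_right (by norm_num))

lemma grad_continuous {f : Eu n → ℝ} (hf : ContDiff ℝ 1 f) : Continuous (gradient f) := by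
  rw [grad_def]
  exact (InnerProductSpace.toDual ℝ (Eu n)).symm.continuous.comp
    (hf.continuous_fderiv one_ne_zero)

lemma per_grad {f : Eu n → ℝ} (hd : Differentiable ℝ f) (hper : Per f) : Per (gradient f) := by
  intro x i
  simp only [grad_def]
  rw [per_fderiv hd hper x i]

lemma lap_eq (f : Eu n → ℝ) (x : Eu n) :
    lap f x = ∑ i, (fderiv ℝ (gradient f) x (EuclideanSpace.single i 1)) i := by
  simp [lap, inner_single]

lemma lap_continuous {f : Eu n → ℝ} (hf : ContDiff ℝ 2 f) : Continuous (lap f) := by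
  have h1 : Continuous (fderiv ℝ (gradient f)) :=
    (grad_contDiff_one hf).continuous_fderiv one_ne_zero
  have : Continuous fun x => ∑ i, (fderiv ℝ (gradient f) x (EuclideanSpace.single i 1)) i := by
    refine continuous_finset_sum _ fun i _ => ?_
    exact (EuclideanSpace.proj i).continuous.comp (h1.clm_apply continuous_const)
  refine this.congr fun x => ?_
  rw [lap_eq]

lemma per_mul {f g : Eu n → ℝ} (hf : Per f) (hg : Per g) :
    Per (fun x => f x * g x) := fun x i => by simp only [hf x i, hg x i]

/-- Integration by parts: `∫ ∇ψ·∇c + ψ Δc = 0` for periodic `ψ` (C¹) and `c` (C²). -/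
lemma claim1 {ψ c : Eu n → ℝ} (hψ : ContDiff ℝ 1 ψ) (hψper : Per ψ)
    (hc : ContDiff ℝ 2 c) (hcper : Per c) :
    ∫ x in cube n, (⟪gradient ψ x, gradient c x⟫ + ψ x * lap c x) = 0 := by
  have hgc : ContDiff ℝ 1 (gradient c) := grad_contDiff_one hc
  have hgcper : Per (gradient c) := per_grad (hc.differentiable (by norm_num)) hcper
  set v : Fin n → Eu n → ℝ := fun i x => ψ x * gradient c x i with hv
  have hvcd : ∀ i, ContDiff ℝ 1 (v i) := by
    intro i
    have : ContDiff ℝ 1 (⇑(EuclideanSpace.proj (𝕜 := ℝ) i) ∘ gradient c) :=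
      (EuclideanSpace.proj (𝕜 := ℝ) i).contDiff.comp hgc
    exact hψ.mul this
  have hvper : ∀ i, Per (v i) := by
    intro i
    refine per_mul hψper fun x j => ?_
    rw [hgcper x j]
  -- pointwise identity
  have hpt : ∀ x, ∑ i, fderiv ℝ (v i) x (EuclideanSpace.single i 1)
      = ⟪gradient ψ x, gradient c x⟫ + ψ x * lap c x := by
    intro x
    have hterm : ∀ i, fderiv ℝ (v i) x (EuclideanSpace.single i 1)
        = gradient c x i * fderiv ℝ ψ x (EuclideanSpace.single i 1)
          + ψ x * (fderiv ℝ (gradient c) x (EuclideanSpace.single i 1)) i := by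
      intro i
      have hgi0 : HasFDerivAt (⇑(EuclideanSpace.proj (𝕜 := ℝ) i) ∘ gradient c)
          ((EuclideanSpace.proj (𝕜 := ℝ) i).comp (fderiv ℝ (gradient c) x)) x :=
        (EuclideanSpace.proj (𝕜 := ℝ) i).hasFDerivAt.comp x
          ((hgc.differentiable one_ne_zero x).hasFDerivAt)
      have hgi : HasFDerivAt (fun y => gradient c y i)
          ((EuclideanSpace.proj (𝕜 := ℝ) i).comp (fderiv ℝ (gradient c) x)) x := hgi0
      have hψx : HasFDerivAt ψ (fderiv ℝ ψ x) x := (hψ.differentiable one_ne_zero x).hasFDerivAt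
      have := (hψx.fun_mul hgi).fderiv
      rw [hv]
      rw [this]
      simp only [ContinuousLinearMap.add_apply, ContinuousLinearMap.coe_smul',
        Pi.smul_apply, ContinuousLinearMap.coe_comp', Function.comp_apply,
        smul_eq_mul]
      ring_nf
      rfl
    rw [Finset.sum_congr rfl fun i _ => hterm i, Finset.sum_add_distrib, ← Finset.mul_sum,
      ← lap_eq]
    congr 1
    rw [innerE, Finset.sum_congr rfl fun i _ => ?_]
    rw [grad_coord ψ x i]
    ring
  -- each term integrates to zero
  have hzero : ∀ i, ∫ x in cube n, fderiv ℝ (v i) x (EuclideanSpace.single i 1) = 0 := by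
    intro i
    obtain ⟨K, hK⟩ := lipschitz_of_contDiff_per (hvcd i) (hvper i)
    exact integral_fderiv_cube_eq_zero hK (hvper i) _
  have hint : ∀ i, IntegrableOn (fun x => fderiv ℝ (v i) x (EuclideanSpace.single i 1))
      (cube n) := by
    intro i
    exact ((((hvcd i).continuous_fderiv one_ne_zero).clm_apply
      continuous_const).continuousOn).integrableOn_compact cube_compact
  calc ∫ x in cube n, (⟪gradient ψ x, gradient c x⟫ + ψ x * lap c x)
      = ∫ x in cube n, ∑ i, fderiv ℝ (v i) x (EuclideanSpace.single i 1) := by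
        refine setIntegral_congr_fun cube_compact.isClosed.measurableSet fun x _ => ?_
        rw [hpt x]
    _ = ∑ i, ∫ x in cube n, fderiv ℝ (v i) x (EuclideanSpace.single i 1) :=
        integral_finset_sum _ fun i _ => hint i
    _ = 0 := by simp [hzero]

/-- Transport identity: `∫ ∇h·u = 0` for Lipschitz periodic divergence-free `u`
and C¹ periodic `h`. -/
lemma claim2 {u : Eu n → Eu n} {K : NNReal} (hulip : LipschitzWith K u) (huper : Per u)
    (hudiv : ∀ x, divg u x = 0) {h : Eu n → ℝ} (hh : ContDiff ℝ 1 h) (hhper : Per h) :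
    ∫ x in cube n, fderiv ℝ h x (u x) = 0 := by
  obtain ⟨Kh, hKh⟩ := lipschitz_of_contDiff_per hh hhper
  obtain ⟨Ch, hCh0, hCh⟩ := bounded_of_continuous_per (hh.continuous) hhper
  obtain ⟨Cu, hCu0, hCu⟩ := bounded_of_continuous_per hulip.continuous huper
  -- the coordinate functions of u
  have hui_lip : ∀ i, LipschitzWith (1 * K) (fun x => u x i) := by
    intro i
    have : LipschitzWith 1 (⇑(EuclideanSpace.proj (𝕜 := ℝ) i)) := by
      have := (EuclideanSpace.proj (𝕜 := ℝ) (ι := Fin n) i).lipschitz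
      refine this.weaken ?_
      have : ‖EuclideanSpace.proj (𝕜 := ℝ) (ι := Fin n) i‖ ≤ 1 :=
        (EuclideanSpace.proj (𝕜 := ℝ) (ι := Fin n) i).opNorm_le_bound zero_le_one
          fun z => by
            rw [one_mul]
            have : |z i| ≤ ‖z‖ := by
              rw [← inner_single z i]
              calc |⟪z, EuclideanSpace.single i 1⟫| ≤ ‖z‖ * ‖EuclideanSpace.single i (1:ℝ)‖ :=
                    abs_real_inner_le_norm _ _
                _ = ‖z‖ := by rw [EuclideanSpace.norm_single]; simp
            simpa using this
      rwa [← NNReal.coe_le_coe, coe_nnnorm]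
    exact this.comp hulip
  have hui_bdd : ∀ i x, ‖u x i‖ ≤ Cu := by
    intro i x
    have : |u x i| ≤ ‖u x‖ := by
      rw [← inner_single (u x) i]
      calc |⟪u x, EuclideanSpace.single i 1⟫| ≤ ‖u x‖ * ‖EuclideanSpace.single i (1:ℝ)‖ :=
            abs_real_inner_le_norm _ _
        _ = ‖u x‖ := by rw [EuclideanSpace.norm_single]; simp
    exact le_trans (by simpa using this) (hCu x)
  set v : Fin n → Eu n → ℝ := fun i x => h x * u x i with hv
  have hvlip : ∀ i, ∃ Ki : NNReal, LipschitzWith Ki (v i) := fun i =>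
    lipschitz_mul hKh (hui_lip i) hCh (hui_bdd i)
  have hvper : ∀ i, Per (v i) := by
    intro i
    refine per_mul hhper fun x j => ?_
    show u (x + EuclideanSpace.single j 1) i = u x i
    rw [huper x j]
  -- each ∫ ∂ᵢ(h uᵢ) = 0
  have hzero : ∀ i, ∫ x in cube n, fderiv ℝ (v i) x (EuclideanSpace.single i 1) = 0 := by
    intro i
    obtain ⟨Ki, hKi⟩ := hvlip i
    exact integral_fderiv_cube_eq_zero hKi (hvper i) _
  -- integrability of the summands
  have hint : ∀ i, IntegrableOn (fun x => fderiv ℝ (v i) x (EuclideanSpace.single i 1))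
      (cube n) := by
    intro i
    obtain ⟨Ki, hKi⟩ := hvlip i
    have hmeas : Measurable (fun x => fderiv ℝ (v i) x (EuclideanSpace.single i 1)) :=
      measurable_fderiv_apply_const ℝ (f := v i) (EuclideanSpace.single i 1 : Eu n)
    have hbd : ∀ x, ‖fderiv ℝ (v i) x (EuclideanSpace.single i 1)‖ ≤
        (Ki : ℝ) * ‖(EuclideanSpace.single i (1:ℝ) : Eu n)‖ := by
      intro x
      calc ‖fderiv ℝ (v i) x (EuclideanSpace.single i 1)‖
          ≤ ‖fderiv ℝ (v i) x‖ * ‖(EuclideanSpace.single i (1:ℝ) : Eu n)‖ :=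
            (fderiv ℝ (v i) x).le_opNorm _
        _ ≤ (Ki : ℝ) * ‖(EuclideanSpace.single i (1:ℝ) : Eu n)‖ := by
            gcongr
            exact norm_fderiv_le_of_lipschitz ℝ hKi
    have : IsFiniteMeasure (volume.restrict (cube n)) :=
      ⟨by rw [Measure.restrict_apply_univ]; exact cube_compact.measure_lt_top⟩
    exact (integrable_const ((Ki : ℝ) * ‖(EuclideanSpace.single i (1:ℝ) : Eu n)‖)).mono'
      hmeas.aestronglyMeasurable (ae_of_all _ hbd)
  -- a.e. pointwise identity
  have hae : ∀ᵐ x ∂(volume : Measure (Eu n)),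
      fderiv ℝ h x (u x) = ∑ i, fderiv ℝ (v i) x (EuclideanSpace.single i 1) := by
    filter_upwards [hulip.ae_differentiableAt (μ := volume)] with x hx
    have hterm : ∀ i, fderiv ℝ (v i) x (EuclideanSpace.single i 1)
        = h x * (fderiv ℝ u x (EuclideanSpace.single i 1)) i
          + u x i * fderiv ℝ h x (EuclideanSpace.single i 1) := by
      intro i
      have hgi0 : HasFDerivAt (⇑(EuclideanSpace.proj (𝕜 := ℝ) i) ∘ u)
          ((EuclideanSpace.proj (𝕜 := ℝ) i).comp (fderiv ℝ u x)) x :=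
        (EuclideanSpace.proj (𝕜 := ℝ) i).hasFDerivAt.comp x hx.hasFDerivAt
      have hgi : HasFDerivAt (fun y => u y i)
          ((EuclideanSpace.proj (𝕜 := ℝ) i).comp (fderiv ℝ u x)) x := hgi0
      have hhx : HasFDerivAt h (fderiv ℝ h x) x := (hh.differentiable one_ne_zero x).hasFDerivAt
      have := (hhx.fun_mul hgi).fderiv
      rw [hv, this]
      simp only [ContinuousLinearMap.add_apply, ContinuousLinearMap.coe_smul',
        Pi.smul_apply, ContinuousLinearMap.coe_comp', Function.comp_apply, smul_eq_mul]
      ring_nf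
      rfl
    rw [Finset.sum_congr rfl fun i _ => hterm i, Finset.sum_add_distrib, ← Finset.mul_sum]
    have hdiv : ∑ i, (fderiv ℝ u x (EuclideanSpace.single i 1)) i = 0 := hudiv x
    rw [hdiv, mul_zero, zero_add]
    -- ∑ i, u x i * ∂ᵢ h = fderiv h x (u x)
    rw [← inner_grad h x (u x), innerE]
    refine Finset.sum_congr rfl fun i _ => ?_
    rw [grad_coord h x i]
    ring
  calc ∫ x in cube n, fderiv ℝ h x (u x)
      = ∫ x in cube n, ∑ i, fderiv ℝ (v i) x (EuclideanSpace.single i 1) :=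
        integral_congr_ae (ae_restrict_of_ae hae)
    _ = ∑ i, ∫ x in cube n, fderiv ℝ (v i) x (EuclideanSpace.single i 1) :=
        integral_finset_sum _ fun i _ => hint i
    _ = 0 := by simp [hzero]

lemma fderiv_mul_apply {f g : Eu n → ℝ} (hf : ContDiff ℝ 1 f) (hg : ContDiff ℝ 1 g)
    (x y : Eu n) :
    fderiv ℝ (fun z => f z * g z) x y = f x * fderiv ℝ g x y + g x * fderiv ℝ f x y := by
  rw [((hf.differentiable one_ne_zero x).hasFDerivAt.fun_mul
    (hg.differentiable one_ne_zero x).hasFDerivAt).fderiv]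
  simp only [ContinuousLinearMap.add_apply, ContinuousLinearMap.coe_smul', Pi.smul_apply,
    smul_eq_mul]



/-- If for each `A` the mean-zero periodic solution `χ A` of the cell problem
`-Δχ + A u·∇χ = A u·e` defines the effective diffusivity `D A = 1 + ∫ |∇χ|²`, and
`u·∇φ = u·e` admits a mean-zero periodic solution `φ`, then
`D A ≤ 1 + 4‖∇φ‖²` for all `A`; in particular `D` is bounded above. -/

theorem stmt1 {n : ℕ} (u : EuclideanSpace ℝ (Fin n) → EuclideanSpace ℝ (Fin n))
    (e : EuclideanSpace ℝ (Fin n)) (he : ‖e‖ = 1) (K : NNReal) (hulip : LipschitzWith K u)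
    (huper : ∀ x i, u (x + EuclideanSpace.single i 1) = u x)
    (hudiv : ∀ x, divg u x = 0)
    (humean : ∫ x in cube n, u x = 0)
    (χ : ℝ → EuclideanSpace ℝ (Fin n) → ℝ)
    (hχ : ∀ A, ContDiff ℝ 2 (χ A))
    (hχper : ∀ A x i, χ A (x + EuclideanSpace.single i 1) = χ A x)
    (hχmean : ∀ A, ∫ x in cube n, χ A x = 0)
    (hχeq : ∀ A x, -lap (χ A) x + A * ⟪u x, gradient (χ A) x⟫ = A * ⟪u x, e⟫)
    (D : ℝ → ℝ)
    (hD : ∀ A, D A = 1 + ∫ x in cube n, ‖gradient (χ A) x‖ ^ 2)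
    (φ : EuclideanSpace ℝ (Fin n) → ℝ) (hφ : ContDiff ℝ 1 φ)
    (hφper : ∀ x i, φ (x + EuclideanSpace.single i 1) = φ x)
    (hφmean : ∫ x in cube n, φ x = 0)
    (hφeq : ∀ x, ⟪u x, gradient φ x⟫ = ⟪u x, e⟫) :
    (∀ A : ℝ, D A ≤ 1 + 4 * ∫ x in cube n, ‖gradient φ x‖ ^ 2) ∧
      BddAbove (Set.range D) := by
  have hup : Per u := huper
  have hφp : Per φ := hφper
  have hmeascube : MeasurableSet (cube n) := cube_compact.isClosed.measurableSet
  have hφnn : 0 ≤ ∫ x in cube n, ‖gradient φ x‖ ^ 2 :=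
    setIntegral_nonneg hmeascube fun x _ => by positivity
  have main : ∀ A : ℝ, ∫ x in cube n, ‖gradient (χ A) x‖ ^ 2
      ≤ ∫ x in cube n, ‖gradient φ x‖ ^ 2 := by
    intro A
    set c := χ A with hcdef
    have hc2 : ContDiff ℝ 2 c := hχ A
    have hc1 : ContDiff ℝ 1 c := hc2.of_le (by norm_num)
    have hcp : Per c := hχper A
    -- pointwise PDE in fderiv form
    have hinner : ∀ (f : Eu n → ℝ) x, ⟪u x, gradient f x⟫ = fderiv ℝ f x (u x) := by
      intro f x
      rw [real_inner_comm, inner_grad]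
    have hlapc : ∀ x, lap c x = A * fderiv ℝ c x (u x) - A * fderiv ℝ φ x (u x) := by
      intro x
      have h1 := hχeq A x
      rw [← hcdef] at h1
      have h2 := hφeq x
      rw [hinner c x] at h1
      rw [hinner φ x] at h2
      rw [← h2] at h1
      linarith
    -- transport identities
    have hcc := claim2 hulip hup hudiv (hc1.mul hc1) (per_mul hcp hcp)
    have hφφ := claim2 hulip hup hudiv (hφ.mul hφ) (per_mul hφp hφp)
    have hcφ := claim2 hulip hup hudiv (hc1.mul hφ) (per_mul hcp hφp)
    -- continuity and integrability facts
    have cu : Continuous u := hulip.continuous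
    have cdc : Continuous fun x => fderiv ℝ c x (u x) :=
      (hc1.continuous_fderiv one_ne_zero).clm_apply cu
    have cdφ : Continuous fun x => fderiv ℝ φ x (u x) :=
      (hφ.continuous_fderiv one_ne_zero).clm_apply cu
    have intOn : ∀ {f : Eu n → ℝ}, Continuous f → IntegrableOn f (cube n) := fun hf =>
      hf.continuousOn.integrableOn_compact cube_compact
    have icdφ : IntegrableOn (fun x => c x * fderiv ℝ φ x (u x)) (cube n) :=
      intOn (hc1.continuous.mul cdφ)
    have iφdc : IntegrableOn (fun x => φ x * fderiv ℝ c x (u x)) (cube n) :=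
      intOn (hφ.continuous.mul cdc)
    have icdc : IntegrableOn (fun x => c x * fderiv ℝ c x (u x)) (cube n) :=
      intOn (hc1.continuous.mul cdc)
    have iφdφ : IntegrableOn (fun x => φ x * fderiv ℝ φ x (u x)) (cube n) :=
      intOn (hφ.continuous.mul cdφ)
    -- X1 = ∫ c ∂c = 0
    have X1 : ∫ x in cube n, c x * fderiv ℝ c x (u x) = 0 := by
      have : ∫ x in cube n, fderiv ℝ (fun z => c z * c z) x (u x)
          = ∫ x in cube n, (2:ℝ) * (c x * fderiv ℝ c x (u x)) := by
        refine setIntegral_congr_fun hmeascube fun x _ => ?_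
        rw [fderiv_mul_apply hc1 hc1]
        ring
      rw [this, integral_const_mul] at hcc
      linarith
    have X4 : ∫ x in cube n, φ x * fderiv ℝ φ x (u x) = 0 := by
      have : ∫ x in cube n, fderiv ℝ (fun z => φ z * φ z) x (u x)
          = ∫ x in cube n, (2:ℝ) * (φ x * fderiv ℝ φ x (u x)) := by
        refine setIntegral_congr_fun hmeascube fun x _ => ?_
        rw [fderiv_mul_apply hφ hφ]
        ring
      rw [this, integral_const_mul] at hφφ
      linarith
    have X23 : ∫ x in cube n, φ x * fderiv ℝ c x (u x)
        = - ∫ x in cube n, c x * fderiv ℝ φ x (u x) := by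
      have : ∫ x in cube n, fderiv ℝ (fun z => c z * φ z) x (u x)
          = ∫ x in cube n, (c x * fderiv ℝ φ x (u x) + φ x * fderiv ℝ c x (u x)) := by
        refine setIntegral_congr_fun hmeascube fun x _ => ?_
        rw [fderiv_mul_apply hc1 hφ]
      rw [this, integral_add icdφ iφdc] at hcφ
      linarith
    -- IBP identities
    have I1 := claim1 hc1 hcp hc2 hcp
    have I2 := claim1 hφ hφp hc2 hcp
    -- rewrite c·lap c
    have hlapint : ∀ {ψ : Eu n → ℝ} (hψc : Continuous ψ)
        (iψdc : IntegrableOn (fun x => ψ x * fderiv ℝ c x (u x)) (cube n))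
        (iψdφ : IntegrableOn (fun x => ψ x * fderiv ℝ φ x (u x)) (cube n)),
        ∫ x in cube n, ψ x * lap c x
          = A * (∫ x in cube n, ψ x * fderiv ℝ c x (u x))
            - A * (∫ x in cube n, ψ x * fderiv ℝ φ x (u x)) := by
      intro ψ hψc iψdc iψdφ
      have : ∫ x in cube n, ψ x * lap c x
          = ∫ x in cube n, (A * (ψ x * fderiv ℝ c x (u x)) - A * (ψ x * fderiv ℝ φ x (u x))) := by
        refine setIntegral_congr_fun hmeascube fun x _ => ?_
        rw [hlapc x]
        ring
      rw [this, integral_sub ((iψdc.const_mul A)) ((iψdφ.const_mul A)),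
        integral_const_mul, integral_const_mul]
    have igg : IntegrableOn (fun x => ⟪gradient c x, gradient c x⟫) (cube n) :=
      intOn ((grad_continuous hc1).inner (grad_continuous hc1))
    have igφg : IntegrableOn (fun x => ⟪gradient φ x, gradient c x⟫) (cube n) :=
      intOn ((grad_continuous hφ).inner (grad_continuous hc1))
    have iclap : IntegrableOn (fun x => c x * lap c x) (cube n) :=
      intOn (hc1.continuous.mul (lap_continuous hc2))
    have iφlap : IntegrableOn (fun x => φ x * lap c x) (cube n) :=
      intOn (hφ.continuous.mul (lap_continuous hc2))
    rw [integral_add igg iclap] at I1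
    rw [integral_add igφg iφlap] at I2
    rw [hlapint hc1.continuous icdc icdφ] at I1
    rw [hlapint hφ.continuous iφdc iφdφ] at I2
    rw [X1] at I1
    rw [X23, X4] at I2
    -- key identity: ∫ ⟪∇c,∇c⟫ = ∫ ⟪∇φ,∇c⟫
    have hkey : ∫ x in cube n, ⟪gradient c x, gradient c x⟫
        = ∫ x in cube n, ⟪gradient φ x, gradient c x⟫ := by linarith
    have hsq : ∫ x in cube n, ⟪gradient c x, gradient c x⟫
        = ∫ x in cube n, ‖gradient c x‖ ^ 2 := by
      refine setIntegral_congr_fun hmeascube fun x _ => ?_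
      rw [real_inner_self_eq_norm_sq]
    have hmono : ∫ x in cube n, ⟪gradient φ x, gradient c x⟫
        ≤ ∫ x in cube n, ((1:ℝ)/2 * ‖gradient φ x‖ ^ 2 + 1/2 * ‖gradient c x‖ ^ 2) := by
      refine integral_mono igφg ?_ fun x => ?_
      · exact ((intOn ((grad_continuous hφ).norm.pow 2)).const_mul _).add
          ((intOn ((grad_continuous hc1).norm.pow 2)).const_mul _)
      · have h1 := real_inner_le_norm (gradient φ x) (gradient c x)
        nlinarith [norm_nonneg (gradient φ x), norm_nonneg (gradient c x),
          sq_nonneg (‖gradient φ x‖ - ‖gradient c x‖)]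
    rw [integral_add ((intOn ((grad_continuous hφ).norm.fun_pow 2)).const_mul _)
      ((intOn ((grad_continuous hc1).norm.fun_pow 2)).const_mul _),
      integral_const_mul, integral_const_mul] at hmono
    rw [hsq] at hkey
    linarith [hkey, hmono]
  constructor
  · intro A
    rw [hD A]
    have := main A
    linarith
  · refine ⟨1 + 4 * ∫ x in cube n, ‖gradient φ x‖ ^ 2, ?_⟩
    rintro y ⟨A, rfl⟩
    rw [hD A]
    have := main A
    linarith
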